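/- Let (A_s)_{s ≥ 0} be a real-valued stochastic process on a probability space such that: A_0 = 0 almost surely; almost surely s ↦ A_s is nondecreasing; A has stationary independent increments, i.e., for every finite sequence 0 ≤ t₀ ≤ t₁ ≤ ⋯ ≤ t_n the increments A_{t₁} − A_{t₀}, …, A_{t_n} − A_{t_{n−1}} are mutually independent and, for all 0 ≤ s ≤ t, A_t − A_s has the same law as A_{t−s}; and P[A₁ > 0] = 1. Then for all a, b > 0, E[A_a / A_{a+b}] = a/(a+b). -/

import Mathlib

open MeasureTheory ProbabilityTheory

lemma my_map_add_of_indep {Ω : Type*} [MeasurableSpace Ω] (P : Measure Ω)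
    [IsProbabilityMeasure P] {X Y : Ω → ℝ} (hX : Measurable X) (hY : Measurable Y)
    (h : IndepFun X Y P) :
    P.map (fun ω => X ω + Y ω)
      = Measure.map (fun p : ℝ × ℝ => p.1 + p.2) ((P.map X).prod (P.map Y)) := by
  rw [← (indepFun_iff_map_prod_eq_prod_map_map hX.aemeasurable hY.aemeasurable).mp h,
    Measure.map_map measurable_add (hX.prodMk hY)]
  rfl

lemma my_pair_law_eq {Ω : Type*} [MeasurableSpace Ω] (P : Measure Ω)
    [IsProbabilityMeasure P] {X Y X' Y' : Ω → ℝ}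
    (hX : Measurable X) (hY : Measurable Y) (hX' : Measurable X') (hY' : Measurable Y')
    (h : IndepFun X Y P) (h' : IndepFun X' Y' P)
    (hx : P.map X = P.map X') (hy : P.map Y = P.map Y') :
    P.map (fun ω => (X ω, Y ω)) = P.map (fun ω => (X' ω, Y' ω)) := by
  rw [(indepFun_iff_map_prod_eq_prod_map_map hX.aemeasurable hY.aemeasurable).mp h,
    (indepFun_iff_map_prod_eq_prod_map_map hX'.aemeasurable hY'.aemeasurable).mp h',
    hx, hy]

lemma my_key {Ω : Type*} [MeasurableSpace Ω] (P : Measure Ω) [IsProbabilityMeasure P]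
    (A : ℝ → Ω → ℝ) (hmeas : ∀ t : ℝ, Measurable (A t))
    (h0 : ∀ᵐ ω ∂P, A 0 ω = 0)
    (hindep : ∀ (n : ℕ) (t : Fin (n + 1) → ℝ), 0 ≤ t 0 → Monotone t →
      iIndepFun
        (fun i : Fin n => fun ω => A (t i.succ) ω - A (t i.castSucc) ω) P)
    (hstat : ∀ s t : ℝ, 0 ≤ s → s ≤ t →
      Measure.map (fun ω => A t ω - A s ω) P = Measure.map (A (t - s)) P)
    (s t T : ℝ) (hs : 0 ≤ s) (ht : 0 ≤ t) (hst : s + t ≤ T) :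
    ∫ ω, (A (s+t) ω - A s ω) / A T ω ∂P = ∫ ω, A t ω / A T ω ∂P := by
  have htT : t ≤ T := by linarith
  have hsT : s ≤ T - t := by linarith
  -- the three-increment family
  set v : Fin 4 → ℝ := ![0, s, s+t, T] with hv
  have hvmono : Monotone v := by
    rw [Fin.monotone_iff_le_succ]
    intro i
    fin_cases i <;>
      simp [hv, Fin.succ, Fin.castSucc, Fin.castAdd, Fin.castLE, Matrix.cons_val_succ] <;>
      linarith
  set F : Fin 3 → Ω → ℝ := fun i => fun ω => A (v i.succ) ω - A (v i.castSucc) ω with hF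
  have hIF : iIndepFun F P :=
    hindep 3 v (by simp [hv]) hvmono
  have hF0 : F 0 = fun ω => A s ω - A 0 ω := by
    funext ω; simp [hF, hv]
  have hF1 : F 1 = fun ω => A (s+t) ω - A s ω := by
    funext ω; simp [hF, hv]
  have hF2 : F 2 = fun ω => A T ω - A (s+t) ω := by
    funext ω; simp [hF, hv, Fin.succ, Fin.castSucc, Fin.castAdd, Fin.castLE,
      Matrix.cons_val_succ]
  have hFmeas : ∀ i, Measurable (F i) := fun i => (hmeas _).sub (hmeas _)
  -- the two-increment family for A (T - t)
  set v2 : Fin 3 → ℝ := ![0, s, T - t] with hv2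
  have hv2mono : Monotone v2 := by
    rw [Fin.monotone_iff_le_succ]
    intro i
    fin_cases i <;>
      simp [hv2, Fin.succ, Fin.castSucc, Fin.castAdd, Fin.castLE, Matrix.cons_val_succ] <;>
      linarith
  set K : Fin 2 → Ω → ℝ := fun i => fun ω => A (v2 i.succ) ω - A (v2 i.castSucc) ω with hK
  have hIK : iIndepFun K P :=
    hindep 2 v2 (by simp [hv2]) hv2mono
  have hK0 : K 0 = fun ω => A s ω - A 0 ω := by funext ω; simp [hK, hv2]
  have hK1 : K 1 = fun ω => A (T - t) ω - A s ω := by funext ω; simp [hK, hv2]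
  have hKmeas : ∀ i, Measurable (K i) := fun i => (hmeas _).sub (hmeas _)
  -- the two-increment family at times 0, t, T
  set v3 : Fin 3 → ℝ := ![0, t, T] with hv3
  have hv3mono : Monotone v3 := by
    rw [Fin.monotone_iff_le_succ]
    intro i
    fin_cases i <;>
      simp [hv3, Fin.succ, Fin.castSucc, Fin.castAdd, Fin.castLE, Matrix.cons_val_succ] <;>
      linarith
  set H : Fin 2 → Ω → ℝ := fun i => fun ω => A (v3 i.succ) ω - A (v3 i.castSucc) ω with hH
  have hIH : iIndepFun H P :=
    hindep 2 v3 (by simp [hv3]) hv3mono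
  have hH0 : H 0 = fun ω => A t ω - A 0 ω := by funext ω; simp [hH, hv3]
  have hH1 : H 1 = fun ω => A T ω - A t ω := by funext ω; simp [hH, hv3]
  have hHmeas : ∀ i, Measurable (H i) := fun i => (hmeas _).sub (hmeas _)
  -- laws
  have lawF1 : P.map (F 1) = P.map (A t) := by
    rw [hF1]
    simpa using hstat s (s+t) hs (by linarith)
  have lawH0 : P.map (H 0) = P.map (A t) := by
    rw [hH0]; simpa using hstat 0 t le_rfl ht
  have lawH1 : P.map (H 1) = P.map (A (T - t)) := by
    rw [hH1]; exact hstat t T ht htT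
  have lawF2K1 : P.map (F 2) = P.map (K 1) := by
    rw [hF2, hK1, hstat (s+t) T (by linarith) (by linarith),
      hstat s (T - t) hs hsT]
    ring_nf
  -- law of the complementary increment F 0 + F 2
  have lawW : P.map (fun ω => F 0 ω + F 2 ω) = P.map (A (T - t)) := by
    have hIndF02 : IndepFun (F 0) (F 2) P := hIF.indepFun (by decide)
    have hIndK01 : IndepFun (K 0) (K 1) P := hIK.indepFun (by decide)
    rw [my_map_add_of_indep P (hFmeas 0) (hFmeas 2) hIndF02]
    rw [show P.map (F 0) = P.map (K 0) by rw [hF0, hK0], lawF2K1]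
    rw [← my_map_add_of_indep P (hKmeas 0) (hKmeas 1) hIndK01]
    have : (fun ω => K 0 ω + K 1 ω) = fun ω => A (T - t) ω - A 0 ω := by
      funext ω; rw [hK0, hK1]; ring
    rw [this]
    simpa using hstat 0 (T - t) le_rfl (by linarith)
  -- independence of the pairs
  have hIndFW : IndepFun (F 1) (F 0 + F 2) P :=
    hIF.indepFun_add_right hFmeas 1 0 2 (by decide) (by decide)
  have hIndH : IndepFun (H 0) (H 1) P := hIH.indepFun (by decide)
  -- equality of the joint laws
  have pairlaw : P.map (fun ω => (F 1 ω, F 0 ω + F 2 ω))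
      = P.map (fun ω => (H 0 ω, H 1 ω)) := by
    exact my_pair_law_eq P (hFmeas 1) ((hFmeas 0).add (hFmeas 2)) (hHmeas 0) (hHmeas 1)
      hIndFW hIndH (lawF1.trans lawH0.symm) (lawW.trans lawH1.symm)
  -- the ratio functional
  set φ : ℝ × ℝ → ℝ := fun p => p.1 / (p.1 + p.2) with hφdef
  have hφ : Measurable φ := measurable_fst.div (measurable_fst.add measurable_snd)
  calc ∫ ω, (A (s+t) ω - A s ω) / A T ω ∂P
      = ∫ ω, φ (F 1 ω, F 0 ω + F 2 ω) ∂P := by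
        refine integral_congr_ae ?_
        filter_upwards [h0] with ω hω
        rw [hF0, hF1, hF2, hφdef]
        simp only []
        rw [hω]
        congr 1 <;> ring
    _ = ∫ p, φ p ∂(P.map (fun ω => (F 1 ω, F 0 ω + F 2 ω))) := by
        rw [integral_map ((hFmeas 1).prodMk (g := fun ω => F 0 ω + F 2 ω) ((hFmeas 0).add (hFmeas 2))).aemeasurable
          hφ.aestronglyMeasurable]
    _ = ∫ p, φ p ∂(P.map (fun ω => (H 0 ω, H 1 ω))) := by rw [pairlaw]
    _ = ∫ ω, φ (H 0 ω, H 1 ω) ∂P := by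
        rw [integral_map ((hHmeas 0).prodMk (hHmeas 1)).aemeasurable
          hφ.aestronglyMeasurable]
    _ = ∫ ω, A t ω / A T ω ∂P := by
        refine integral_congr_ae ?_
        filter_upwards [h0] with ω hω
        rw [hH0, hH1, hφdef]
        simp only []
        rw [hω]
        congr 1 <;> ring

lemma my_pos {Ω : Type*} [MeasurableSpace Ω] (P : Measure Ω) [IsProbabilityMeasure P]
    (A : ℝ → Ω → ℝ) (hmeas : ∀ t : ℝ, Measurable (A t))
    (h0 : ∀ᵐ ω ∂P, A 0 ω = 0)
    (hmono : ∀ᵐ ω ∂P, ∀ s t : ℝ, 0 ≤ s → s ≤ t → A s ω ≤ A t ω)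
    (hindep : ∀ (n : ℕ) (t : Fin (n + 1) → ℝ), 0 ≤ t 0 → Monotone t →
      iIndepFun
        (fun i : Fin n => fun ω => A (t i.succ) ω - A (t i.castSucc) ω) P)
    (hstat : ∀ s t : ℝ, 0 ≤ s → s ≤ t →
      Measure.map (fun ω => A t ω - A s ω) P = Measure.map (A (t - s)) P)
    (hpos : ∀ᵐ ω ∂P, 0 < A 1 ω) (t : ℝ) (ht : 0 < t) :
    ∀ᵐ ω ∂P, 0 < A t ω := by
  obtain ⟨n, hn⟩ := exists_nat_gt (max (1/t) 1)
  have hn1 : (1:ℝ) < n := lt_of_le_of_lt (le_max_right _ _) hn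
  have hn0 : (0:ℝ) < n := by linarith
  have hnne : n ≠ 0 := by
    intro h; rw [h] at hn1; norm_num at hn1
  set δ : ℝ := 1 / n with hδ
  have hδpos : 0 < δ := by positivity
  have hδt : δ ≤ t := by
    have h1t : 1/t < n := lt_of_le_of_lt (le_max_left _ _) hn
    rw [div_lt_iff₀ ht] at h1t
    rw [hδ, div_le_iff₀ hn0]
    nlinarith
  set v : Fin (n+1) → ℝ := fun i => (i : ℝ) * δ with hv
  have hv0 : v 0 = 0 := by simp [hv]
  have hvmono : Monotone v := by
    intro i j hij
    exact mul_le_mul_of_nonneg_right (by exact_mod_cast hij) hδpos.le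
  set G : Fin n → Ω → ℝ := fun i => fun ω => A (v i.succ) ω - A (v i.castSucc) ω with hG
  have hIG : iIndepFun G P :=
    hindep n v (le_of_eq hv0.symm) hvmono
  have hGmeas : ∀ i, Measurable (G i) := fun i => (hmeas _).sub (hmeas _)
  have hdiff : ∀ i : Fin n, v i.succ - v i.castSucc = δ := by
    intro i
    simp only [hv, Fin.val_succ, Fin.coe_castSucc]
    push_cast
    ring
  -- each increment has the law of A δ
  have hGlaw : ∀ i : Fin n, P (G i ⁻¹' {0}) = P (A δ ⁻¹' {0}) := by
    intro i
    have hcsnn : 0 ≤ v i.castSucc := mul_nonneg (Nat.cast_nonneg _) hδpos.le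
    have hle : v i.castSucc ≤ v i.succ := by
      have := hdiff i; linarith
    have h1 : Measure.map (G i) P = Measure.map (A δ) P := by
      rw [hG]
      have h2 := hstat (v i.castSucc) (v i.succ) hcsnn hle
      rw [hdiff i] at h2
      exact h2
    calc P (G i ⁻¹' {0}) = (P.map (G i)) {0} :=
          (Measure.map_apply (hGmeas i) (measurableSet_singleton 0)).symm
      _ = (P.map (A δ)) {0} := by rw [h1]
      _ = P (A δ ⁻¹' {0}) := Measure.map_apply (hmeas δ) (measurableSet_singleton 0)
  have hprod := iIndepFun.measure_inter_preimage_eq_mul hIG Finset.univ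
    (sets := fun _ => ({0} : Set ℝ)) (fun i _ => measurableSet_singleton 0)
  -- the intersection event is null
  have hnullE : P (⋂ i ∈ Finset.univ, G i ⁻¹' ({0} : Set ℝ)) = 0 := by
    have hbad : P {ω | ¬ (A 0 ω = 0 ∧ 0 < A 1 ω)} = 0 := by
      have h := h0.and hpos
      rw [ae_iff] at h
      exact h
    refine measure_mono_null ?_ hbad
    intro ω hω
    simp only [Finset.mem_univ, Set.iInter_true, Set.mem_iInter, Set.mem_preimage,
      Set.mem_singleton_iff] at hω
    simp only [Set.mem_setOf_eq]
    rintro ⟨hA0, hA1⟩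
    set f : ℕ → ℝ := fun k => A ((k : ℝ) * δ) ω with hf
    have hGf : ∀ i : Fin n, G i ω = f (i.val + 1) - f i.val := by
      intro i
      simp only [hG, hf, hv, Fin.val_succ, Fin.coe_castSucc]
    have hsum : ∑ i : Fin n, G i ω = f n - f 0 := by
      rw [Fin.sum_univ_def]
      rw [show (List.finRange n).map (fun i => G i ω)
          = (List.finRange n).map (fun i => (fun k => f (k+1) - f k) i.val) from
        List.map_congr_left fun i _ => hGf i]
      rw [← Fin.sum_univ_def, Fin.sum_univ_eq_sum_range (fun k => f (k+1) - f k) n]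
      exact Finset.sum_range_sub f n
    have hzero : ∑ i : Fin n, G i ω = 0 := by
      apply Finset.sum_eq_zero
      intro i _
      exact hω i
    have hfn : f n = A 1 ω := by
      rw [hf]
      congr 1
      rw [hδ]
      field_simp
    have hf0 : f 0 = 0 := by
      rw [hf]; simpa using hA0
    rw [hzero, hfn, hf0] at hsum
    linarith
  -- deduce that A δ is a.s. nonzero
  have hpn : P (A δ ⁻¹' {0}) = 0 := by
    rw [hnullE] at hprod
    have : ∏ i : Fin n, P (G i ⁻¹' {0}) = P (A δ ⁻¹' {0}) ^ n := by
      rw [Finset.prod_congr rfl (fun i _ => hGlaw i), Finset.prod_const,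
        Finset.card_univ, Fintype.card_fin]
    rw [this] at hprod
    exact pow_eq_zero_iff hnne |>.mp hprod.symm
  have hδne : ∀ᵐ ω ∂P, A δ ω ≠ 0 := by
    rw [ae_iff]
    simpa [Set.preimage, Set.mem_singleton_iff] using hpn
  filter_upwards [h0, hmono, hδne] with ω h1 h2 h3
  have hnn : 0 ≤ A δ ω := h1 ▸ h2 0 δ le_rfl hδpos.le
  exact lt_of_lt_of_le (lt_of_le_of_ne hnn (Ne.symm h3)) (h2 δ t hδpos.le hδt)

/-- Proposition 3.10 for subordinators: if `(A_s)` starts at `0`, is almost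
surely nondecreasing, has stationary independent increments, and `A₁ > 0`
almost surely, then `E[A_a / A_{a+b}] = a/(a+b)` for all `a, b > 0`. -/
theorem subordinator_ratio_expectation
    {Ω : Type*} [MeasurableSpace Ω] (P : Measure Ω) [IsProbabilityMeasure P]
    (A : ℝ → Ω → ℝ)
    (hmeas : ∀ t : ℝ, Measurable (A t))
    (h0 : ∀ᵐ ω ∂P, A 0 ω = 0)
    (hmono : ∀ᵐ ω ∂P, ∀ s t : ℝ, 0 ≤ s → s ≤ t → A s ω ≤ A t ω)
    (hindep : ∀ (n : ℕ) (t : Fin (n + 1) → ℝ), 0 ≤ t 0 → Monotone t →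
      iIndepFun
        (fun i : Fin n => fun ω => A (t i.succ) ω - A (t i.castSucc) ω) P)
    (hstat : ∀ s t : ℝ, 0 ≤ s → s ≤ t →
      Measure.map (fun ω => A t ω - A s ω) P = Measure.map (A (t - s)) P)
    (hpos : ∀ᵐ ω ∂P, 0 < A 1 ω) :
    ∀ a b : ℝ, 0 < a → 0 < b →
      ∫ ω, A a ω / A (a + b) ω ∂P = a / (a + b) := by
  intro a b ha hb
  set T := a + b with hTdef
  have hT : 0 < T := by rw [hTdef]; linarith
  have haT : a < T := by rw [hTdef]; linarith
  have hTpos := my_pos P A hmeas h0 hmono hindep hstat hpos T hT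
  -- boundedness and integrability of the ratios
  have hratio_bound : ∀ s : ℝ, 0 ≤ s → s ≤ T → ∀ᵐ ω ∂P, ‖A s ω / A T ω‖ ≤ 1 := by
    intro s hs hsT
    filter_upwards [h0, hmono] with ω h1 h2
    have h0s : 0 ≤ A s ω := h1 ▸ h2 0 s le_rfl hs
    have hsTω : A s ω ≤ A T ω := h2 s T hs hsT
    rw [Real.norm_eq_abs, abs_div]
    rcases eq_or_lt_of_le (le_trans h0s hsTω) with hT0 | hT0
    · simp [← hT0]
    · rw [abs_of_nonneg h0s, abs_of_pos hT0, div_le_one hT0]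
      exact hsTω
  have hInt : ∀ s : ℝ, 0 ≤ s → s ≤ T → Integrable (fun ω => A s ω / A T ω) P := by
    intro s hs hsT
    exact Integrable.mono' (integrable_const 1)
      ((hmeas s).div (hmeas T)).aestronglyMeasurable (hratio_bound s hs hsT)
  set f : ℝ → ℝ := fun s => ∫ ω, A s ω / A T ω ∂P with hfdef
  have hf0 : f 0 = 0 := by
    have h : (fun ω => A 0 ω / A T ω) =ᵐ[P] fun _ => (0:ℝ) := by
      filter_upwards [h0] with ω hω; simp [hω]
    rw [hfdef]
    simp only []
    rw [integral_congr_ae h, integral_zero]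
  have hfT : f T = 1 := by
    have h : (fun ω => A T ω / A T ω) =ᵐ[P] fun _ => (1:ℝ) := by
      filter_upwards [hTpos] with ω hω; simp [ne_of_gt hω]
    rw [hfdef]
    simp only []
    rw [integral_congr_ae h]
    simp
  have hfmono : ∀ s u : ℝ, 0 ≤ s → s ≤ u → u ≤ T → f s ≤ f u := by
    intro s u hs hsu huT
    refine integral_mono_ae (hInt s hs (le_trans hsu huT)) (hInt u (le_trans hs hsu) huT) ?_
    filter_upwards [h0, hmono] with ω h1 h2
    have h0T : 0 ≤ A T ω := h1 ▸ h2 0 T le_rfl hT.le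
    rcases eq_or_lt_of_le h0T with hT0 | hT0
    · simp [← hT0]
    · gcongr
      exact h2 s u hs hsu
  have hadd : ∀ s u : ℝ, 0 ≤ s → 0 ≤ u → s + u ≤ T → f (s + u) = f s + f u := by
    intro s u hs hu hsu
    have hk := my_key P A hmeas h0 hindep hstat s u T hs hu hsu
    have hsub : ∫ ω, (A (s+u) ω - A s ω) / A T ω ∂P = f (s+u) - f s := by
      have he : (fun ω => (A (s+u) ω - A s ω) / A T ω)
          = fun ω => A (s+u) ω / A T ω - A s ω / A T ω := by
        funext ω; rw [sub_div]
      rw [he, integral_sub (hInt (s+u) (by linarith) hsu) (hInt s hs (by linarith))]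
    rw [hsub] at hk
    linarith [hk]
  -- values at rational multiples of T
  have hmul : ∀ n : ℕ, n ≠ 0 → ∀ k : ℕ, k ≤ n → f ((k : ℝ) * (T / n)) = k / n := by
    intro n hn
    have hnR : (0:ℝ) < n := by exact_mod_cast Nat.pos_of_ne_zero hn
    set u := T / n with hu
    have hupos : 0 < u := div_pos hT hnR
    have hstep : ∀ k : ℕ, k ≤ n → f ((k : ℝ) * u) = k * f u := by
      intro k
      induction k with
      | zero => intro _; simpa using hf0
      | succ k ih =>
        intro hk
        have hk' : k ≤ n := Nat.le_of_succ_le hk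
        have hkn : ((k:ℝ)+1) ≤ n := by exact_mod_cast hk
        have h1 : ((k:ℝ)+1) * u ≤ T := by
          have h2 : ((k:ℝ)+1)*u ≤ n * u := by nlinarith
          have h3 : (n:ℝ) * u = T := by rw [hu]; field_simp
          linarith
        calc f (((k+1 : ℕ) : ℝ) * u) = f ((k:ℝ)*u + u) := by push_cast; ring_nf
          _ = f ((k:ℝ)*u) + f u := by
              refine hadd _ _ (by positivity) hupos.le ?_
              linarith
          _ = (k:ℝ) * f u + f u := by rw [ih hk']
          _ = ((k+1:ℕ):ℝ) * f u := by push_cast; ring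
    have hfu : f u = 1 / n := by
      have h1 := hstep n le_rfl
      rw [show (n:ℝ) * u = T by rw [hu]; field_simp, hfT] at h1
      rw [eq_div_iff hnR.ne']
      linarith
    intro k hk
    rw [hstep k hk, hfu, mul_one_div]
  -- squeeze
  have hsq : ∀ n : ℕ, n ≠ 0 → |f a - a / T| ≤ 1 / n := by
    intro n hn
    have hnR : (0:ℝ) < n := by exact_mod_cast Nat.pos_of_ne_zero hn
    set u := T / n with hu
    have hupos : 0 < u := div_pos hT hnR
    have hnu : (n:ℝ) * u = T := by rw [hu]; field_simp
    set k := ⌊a / u⌋₊ with hkdef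
    have hk1 : (k:ℝ) ≤ a / u := Nat.floor_le (by positivity)
    have hk2 : a / u < k + 1 := Nat.lt_floor_add_one _
    have hku : (k:ℝ) * u ≤ a := (le_div_iff₀ hupos).mp hk1
    have hak : a < ((k:ℝ)+1) * u := (div_lt_iff₀ hupos).mp hk2
    have hkn : k < n := by
      have h2 : a / u < n := by
        rw [div_lt_iff₀ hupos]
        linarith
      have : (k:ℝ) < n := lt_of_le_of_lt hk1 h2
      exact_mod_cast this
    have hk1n : k + 1 ≤ n := hkn
    have hlow : (k:ℝ)/n ≤ f a := by
      rw [← hmul n hn k hkn.le]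
      exact hfmono ((k:ℝ)*u) a (by positivity) hku haT.le
    have hhigh : f a ≤ ((k:ℝ)+1)/n := by
      have h3 : ((k:ℝ)+1) * u ≤ T := by
        have : ((k:ℝ)+1) ≤ n := by exact_mod_cast hk1n
        nlinarith
      have h4 : f a ≤ f (((k+1:ℕ) : ℝ) * u) := by
        refine hfmono a _ ha.le ?_ ?_ <;> push_cast <;> linarith
      rw [hmul n hn (k+1) hk1n] at h4
      push_cast at h4
      exact h4
    have hlowT : (k:ℝ)/n ≤ a/T := by
      rw [div_le_div_iff₀ hnR hT]
      nlinarith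
    have hhighT : a/T ≤ ((k:ℝ)+1)/n := by
      rw [div_le_div_iff₀ hT hnR]
      nlinarith
    have hsplit : ((k:ℝ)+1)/n = (k:ℝ)/n + 1/n := by ring
    rw [abs_le]
    constructor <;> linarith
  -- conclusion
  have hfin : f a = a / T := by
    by_contra hne
    have hpos' : 0 < |f a - a / T| := abs_pos.mpr (sub_ne_zero.mpr hne)
    obtain ⟨n, hn⟩ := exists_nat_one_div_lt hpos'
    have h5 := hsq (n+1) (Nat.succ_ne_zero n)
    push_cast at h5
    linarith
  exact hfin
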